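/- For every unitary C in the third level C^(3) of the Clifford hierarchy, there exists a nonzero c ∈ F_2^{2m} such that C E(c) C† is again an element of the Heisenberg–Weyl group (equal to a Pauli matrix E' E(c) for some Pauli E'). As a consequence, there exists a Clifford matrix G such that G·C commutes with some nontrivial Hermitian Pauli matrix. -/

import Mathlib

open Matrix
open scoped Classical

noncomputable section

abbrev V (m : ℕ) := Fin m → ZMod 2

/-- Integer dot product of two binary vectors (using {0,1} representatives). -/
def dotN {m : ℕ} (a b : V m) : ℕ := ∑ i, (a i).val * (b i).val

/-- The matrix `D(a,b)` with `D(a,b)|v⟩ = (−1)^{b·v}|v⊕a⟩`. -/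
def DM {m : ℕ} (a b : V m) : Matrix (V m) (V m) ℂ :=
  Matrix.of fun u v => if u = v + a then (-1 : ℂ) ^ dotN b v else 0

/-- The Hermitian Pauli `E(a,b) = i^{a·b mod 4} D(a,b)`, for `c = (a,b) ∈ F_2^{2m}`. -/
def EM {m : ℕ} (c : V m × V m) : Matrix (V m) (V m) ℂ :=
  Complex.I ^ dotN c.1 c.2 • DM c.1 c.2

/-- The Heisenberg–Weyl group `HW_N = {i^k D(a,b)}`, as a set of matrices. -/
def HW (m : ℕ) : Set (Matrix (V m) (V m) ℂ) :=
  {M | ∃ (k : Fin 4) (a b : V m), M = Complex.I ^ (k : ℕ) • DM a b}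

/-- A Clifford matrix: a unitary normalizing the Heisenberg–Weyl group. -/
def IsClifford {m : ℕ} (G : Matrix (V m) (V m) ℂ) : Prop :=
  G ∈ Matrix.unitaryGroup (V m) ℂ ∧ ∀ W ∈ HW m, G * W * Gᴴ ∈ HW m

/-- The (Pauli/Weyl) support of a matrix, identified with vectors in `F_2^{2m}`. -/
def supp {m : ℕ} (M : Matrix (V m) (V m) ℂ) : Set (V m × V m) :=
  {c | Matrix.trace ((EM c)ᴴ * M) ≠ 0}

/-- The symplectic inner product on `F_2^{2m}`. -/
def sympl {m : ℕ} (u v : V m × V m) : ZMod 2 :=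
  ∑ i, (u.1 i * v.2 i + u.2 i * v.1 i)

/-- The Clifford hierarchy; `CH m k` is the `(k+1)`-st level `C^(k+1)`, so
`CH m 0 = HW_N = C^(1)` and `C^(3) = CH m 2`. -/
def CH (m : ℕ) : ℕ → Set (Matrix (V m) (V m) ℂ)
  | 0 => HW m
  | k + 1 => {U | U ∈ Matrix.unitaryGroup (V m) ℂ ∧ ∀ W ∈ HW m, U * W * Uᴴ ∈ CH m k}



section helpers
variable {m : ℕ}

lemma zval (x : ZMod 2) : ((x.val : ℕ) : ZMod 2) = x := by revert x; decide

lemma zval_inj {x y : ZMod 2} (h : x.val = y.val) : x = y := by revert x y h; decide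

lemma ztwo (x : ZMod 2) : x = 0 ∨ x = 1 := by revert x; decide

lemma zadd_self (x : ZMod 2) : x + x = 0 := by revert x; decide

lemma sgn_congr {a b : ℕ} (h : (a : ZMod 2) = (b : ZMod 2)) : (-1 : ℂ)^a = (-1)^b := by
  have h2 : a % 2 = b % 2 := (ZMod.natCast_eq_natCast_iff a b 2).mp h
  rw [← Nat.div_add_mod a 2, ← Nat.div_add_mod b 2, pow_add, pow_add, pow_mul, pow_mul,
    neg_one_sq, one_pow, one_pow, h2]

lemma dotN_cast (a b : V m) : ((dotN a b : ℕ) : ZMod 2) = ∑ i, a i * b i := by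
  unfold dotN
  push_cast
  exact Finset.sum_congr rfl fun i _ => by rw [zval, zval]

lemma dotN_comm (a b : V m) : dotN a b = dotN b a := by
  unfold dotN; exact Finset.sum_congr rfl fun i _ => Nat.mul_comm _ _

lemma dotN_zero_left (b : V m) : dotN 0 b = 0 := by
  unfold dotN
  simp [Pi.zero_apply, ZMod.val_zero]

lemma dotN_zero_right (a : V m) : dotN a 0 = 0 := by rw [dotN_comm, dotN_zero_left]

lemma dotN_single_right (b : V m) (i : Fin m) : dotN b (Pi.single i 1) = (b i).val := by
  unfold dotN
  rw [Finset.sum_eq_single i]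
  · rw [Pi.single_eq_same]
    norm_num [show ((1 : ZMod 2)).val = 1 from rfl]
  · intro j _ hj
    simp [Pi.single_apply, hj]
  · intro h; exact absurd (Finset.mem_univ _) h

lemma DM_mul (a b a' b' : V m) :
    DM a b * DM a' b' = ((-1 : ℂ) ^ dotN b a') • DM (a + a') (b + b') := by
  ext u w
  rw [Matrix.mul_apply]
  simp only [DM, Matrix.of_apply, Matrix.smul_apply, smul_eq_mul]
  rw [Finset.sum_eq_single (w + a')]
  · have hcond : (u = w + a' + a) ↔ (u = w + (a + a')) := by
      rw [add_assoc, add_comm a' a]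
    by_cases h : u = w + a' + a
    · rw [if_pos rfl, if_pos h, if_pos (hcond.mp h)]
      rw [← pow_add, ← pow_add]
      apply sgn_congr
      push_cast
      simp only [dotN_cast, ← Finset.sum_add_distrib]
      exact Finset.sum_congr rfl fun i _ => by simp only [Pi.add_apply]; ring
    · rw [if_pos rfl, if_neg h, if_neg (fun hh => h (hcond.mpr hh)), zero_mul, mul_zero]
  · intro v _ hv
    rw [if_neg hv, mul_zero]
  · intro h; exact absurd (Finset.mem_univ _) h

lemma DM_zero : DM (0 : V m) 0 = 1 := by
  ext u v
  simp only [DM, Matrix.of_apply, add_zero, dotN_zero_left, pow_zero, Matrix.one_apply]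

lemma DM_apply_self (a b : V m) : DM a b (a) 0 = 1 := by
  simp [DM, dotN_zero_right]

lemma DM_smul_inj {a b a' b' : V m} {z w : ℂ} (h : z • DM a b = w • DM a' b')
    (hz : z ≠ 0) : a = a' ∧ b = b' ∧ z = w := by
  have ha : a = a' := by
    by_contra hne
    have h1 := congrFun (congrFun h a) 0
    simp [DM, dotN_zero_right, hne] at h1
    exact hz h1
  subst ha
  have hzw : z = w := by
    have h1 := congrFun (congrFun h a) 0
    simp [DM, dotN_zero_right] at h1
    exact h1
  subst hzw
  refine ⟨rfl, ?_, rfl⟩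
  funext i
  have h1 := congrFun (congrFun h (Pi.single i 1 + a)) (Pi.single i 1)
  simp [DM, dotN_single_right] at h1
  have h2 : ((-1 : ℂ)) ^ (b i).val = (-1) ^ (b' i).val := h1.resolve_right hz
  apply zval_inj
  have hb : (b i).val = 0 ∨ (b i).val = 1 := by have := ZMod.val_lt (b i); omega
  have hb' : (b' i).val = 0 ∨ (b' i).val = 1 := by have := ZMod.val_lt (b' i); omega
  rcases hb with hb | hb <;> rcases hb' with hb' | hb' <;>
    rw [hb, hb'] at h2 ⊢ <;> first | rfl | norm_num at h2

def sdot {m : ℕ} (c d : V m × V m) : ℕ := dotN c.1 d.2 + dotN c.2 d.1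

lemma sdot_comm (c d : V m × V m) : sdot c d = sdot d c := by
  unfold sdot
  rw [dotN_comm c.1 d.2, dotN_comm c.2 d.1]
  omega

lemma I_four : (Complex.I : ℂ) ^ 4 = 1 := by
  rw [show (4 : ℕ) = 2 * 2 from rfl, pow_mul, Complex.I_sq]; norm_num

lemma Ipow_mod (n : ℕ) : (Complex.I : ℂ) ^ n = Complex.I ^ (n % 4) := by
  conv_lhs => rw [← Nat.div_add_mod n 4]
  rw [pow_add, pow_mul, I_four, one_pow, one_mul]

lemma Istar (k : ℕ) : (Complex.I : ℂ) ^ k * star (Complex.I ^ k) = 1 := by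
  have h : Complex.I * -Complex.I = 1 := by
    rw [mul_neg, Complex.I_mul_I]; norm_num
  rw [star_pow, Complex.star_def, Complex.conj_I, ← mul_pow, h, one_pow]

lemma Ipow_ne (k : ℕ) : (Complex.I : ℂ) ^ k ≠ 0 := pow_ne_zero _ Complex.I_ne_zero

lemma EM_zero : EM (0 : V m × V m) = 1 := by
  unfold EM
  simp [dotN_zero_left, DM_zero]

lemma EM_mul (c d : V m × V m) :
    ∃ k : ℕ, EM c * EM d = (Complex.I ^ k) • EM (c + d) := by
  refine ⟨dotN c.1 c.2 + dotN d.1 d.2 + 2 * dotN c.2 d.1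
    + 3 * dotN (c.1 + d.1) (c.2 + d.2), ?_⟩
  unfold EM
  rw [smul_mul_assoc, mul_smul_comm, DM_mul, smul_smul, smul_smul, smul_smul]
  congr 1
  simp only [Prod.fst_add, Prod.snd_add]
  have hI2 : ((-1 : ℂ)) = Complex.I ^ 2 := by rw [Complex.I_sq]
  rw [hI2, ← pow_mul, ← pow_add, ← pow_add, ← pow_add]
  rw [Ipow_mod]
  conv_rhs => rw [Ipow_mod]
  congr 1
  omega

lemma EM_comm (c d : V m × V m) :
    EM c * EM d = ((-1 : ℂ) ^ sdot c d) • (EM d * EM c) := by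
  unfold EM
  rw [smul_mul_assoc, mul_smul_comm, DM_mul, smul_smul, smul_smul,
    smul_mul_assoc, mul_smul_comm, DM_mul, smul_smul, smul_smul, smul_smul]
  rw [add_comm d.1 c.1, add_comm d.2 c.2]
  congr 1
  have key : ((-1 : ℂ)) ^ dotN c.2 d.1 = (-1) ^ sdot c d * (-1) ^ dotN d.2 c.1 := by
    rw [← pow_add]
    apply sgn_congr
    unfold sdot
    push_cast
    simp only [dotN_cast]
    rw [show (∑ i, d.2 i * c.1 i) = ∑ i, c.1 i * d.2 i from
      Finset.sum_congr rfl fun i _ => mul_comm _ _]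
    have hz : (∑ i, c.1 i * d.2 i) + (∑ i, c.1 i * d.2 i) = 0 := by
      rw [← Finset.sum_add_distrib]
      exact Finset.sum_eq_zero fun i _ => zadd_self _
    linear_combination -hz
  rw [key]
  ring

lemma EM_mul_self (c : V m × V m) : EM c * EM c = 1 := by
  unfold EM
  rw [smul_mul_assoc, mul_smul_comm, DM_mul, smul_smul, smul_smul]
  have h1 : c.1 + c.1 = 0 := funext fun i => zadd_self _
  have h2 : c.2 + c.2 = 0 := funext fun i => zadd_self _
  rw [h1, h2, DM_zero, dotN_comm c.2 c.1]
  have hs : (Complex.I ^ dotN c.1 c.2 * Complex.I ^ dotN c.1 c.2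
      * (-1 : ℂ) ^ dotN c.1 c.2) = 1 := by
    rw [← mul_pow, Complex.I_mul_I, ← mul_pow]
    norm_num
  rw [hs, one_smul]

lemma DM_herm (a b : V m) : (DM a b)ᴴ = ((-1 : ℂ) ^ dotN a b) • DM a b := by
  ext u v
  simp only [Matrix.conjTranspose_apply, DM, Matrix.of_apply, Matrix.smul_apply, smul_eq_mul]
  have haa : a + a = 0 := funext fun i => zadd_self (a i)
  have hcond : (v = u + a) ↔ (u = v + a) := by
    constructor <;> intro h <;> rw [h, add_assoc, haa, add_zero]
  by_cases h : u = v + a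
  · rw [if_pos (hcond.mpr h), if_pos h]
    rw [star_pow, star_neg, star_one]
    rw [h, ← pow_add]
    apply sgn_congr
    push_cast
    simp only [dotN_cast, ← Finset.sum_add_distrib]
    apply Finset.sum_congr rfl; intro i _
    simp only [Pi.add_apply]; ring
  · rw [if_neg (fun hh => h (hcond.mp hh)), if_neg h, star_zero, mul_zero]

lemma EM_herm (c : V m × V m) : (EM c)ᴴ = EM c := by
  unfold EM
  rw [Matrix.conjTranspose_smul, DM_herm, smul_smul]
  congr 1
  rw [star_pow, Complex.star_def, Complex.conj_I, neg_pow]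
  rw [mul_assoc, mul_comm (Complex.I ^ _), ← mul_assoc, ← mul_pow]
  norm_num

lemma EM_smul_inj {g g' : V m × V m} {z w : ℂ} (h : z • EM g = w • EM g')
    (hz : z ≠ 0) : g = g' ∧ z = w := by
  unfold EM at h
  rw [smul_smul, smul_smul] at h
  have := DM_smul_inj h (mul_ne_zero hz (Ipow_ne _))
  obtain ⟨h1, h2, h3⟩ := this
  have hg : g = g' := Prod.ext h1 h2
  subst hg
  exact ⟨rfl, mul_right_cancel₀ (Ipow_ne _) h3⟩

lemma EM_ne_zero (g : V m × V m) : EM g ≠ 0 := by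
  intro h
  have h1 := congrFun (congrFun h g.1) 0
  simp [EM, DM, dotN_zero_right] at h1

lemma EM_mem_HW (c : V m × V m) : EM c ∈ HW m := by
  refine ⟨⟨dotN c.1 c.2 % 4, by omega⟩, c.1, c.2, ?_⟩
  unfold EM
  rw [Ipow_mod]

lemma DM_eq_EM (a b : V m) : DM a b = (Complex.I ^ (3 * dotN a b)) • EM (a, b) := by
  unfold EM
  rw [smul_smul, ← pow_add]
  rw [show 3 * dotN a b + dotN (a, b).1 (a, b).2 = 4 * dotN a b by simp; ring]
  rw [pow_mul, I_four, one_pow, one_smul]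

lemma HW_mul {M M' : Matrix (V m) (V m) ℂ} (h : M ∈ HW m) (h' : M' ∈ HW m) :
    M * M' ∈ HW m := by
  obtain ⟨j, a, b, rfl⟩ := h
  obtain ⟨k, a', b', rfl⟩ := h'
  refine ⟨⟨((j : ℕ) + (k : ℕ) + 2 * dotN b a') % 4, by omega⟩, a + a', b + b', ?_⟩
  rw [smul_mul_assoc, mul_smul_comm, DM_mul, smul_smul, smul_smul]
  congr 1
  have hI2 : ((-1 : ℂ)) = Complex.I ^ 2 := by rw [Complex.I_sq]
  rw [hI2, ← pow_mul, ← pow_add, ← pow_add, ← Ipow_mod]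

lemma HW_Ismul {M : Matrix (V m) (V m) ℂ} (j : ℕ) (h : M ∈ HW m) :
    Complex.I ^ j • M ∈ HW m := by
  obtain ⟨k, a, b, rfl⟩ := h
  refine ⟨⟨(j + (k : ℕ)) % 4, by omega⟩, a, b, ?_⟩
  rw [smul_smul, ← pow_add, ← Ipow_mod]

lemma HW_pm {M : Matrix (V m) (V m) ℂ} {z : ℂ} (hz : z = 1 ∨ z = -1) (h : M ∈ HW m) :
    z • M ∈ HW m := by
  rcases hz with rfl | rfl
  · rwa [one_smul]
  · have : (-1 : ℂ) = Complex.I ^ 2 := by rw [Complex.I_sq]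
    rw [this]
    exact HW_Ismul 2 h

lemma neg_one_pow_pm (t : ℕ) : ((-1 : ℂ)) ^ t = 1 ∨ ((-1 : ℂ)) ^ t = -1 := by
  rcases Nat.even_or_odd t with h | h
  · exact Or.inl h.neg_one_pow
  · exact Or.inr h.neg_one_pow

lemma HW_herm {M : Matrix (V m) (V m) ℂ} (h : M ∈ HW m) (hH : Mᴴ = M) :
    ∃ (z : ℂ) (g : V m × V m), (z = 1 ∨ z = -1) ∧ M = z • EM g := by
  obtain ⟨k, a, b, rfl⟩ := h
  set n := dotN a b with hn
  rw [Matrix.conjTranspose_smul, DM_herm, smul_smul] at hH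
  have heq := (DM_smul_inj hH (mul_ne_zero (star_ne_zero.mpr (Ipow_ne _))
    (pow_ne_zero _ (by norm_num)))).2.2
  have hstar : star ((Complex.I : ℂ) ^ (k : ℕ)) = (-1 : ℂ) ^ (k : ℕ) * Complex.I ^ (k : ℕ) := by
    rw [star_pow, Complex.star_def, Complex.conj_I, neg_pow]
  rw [hstar] at heq
  have heven : Even ((k : ℕ) + n) := by
    have h1 : ((-1 : ℂ)) ^ ((k : ℕ) + n) * Complex.I ^ (k : ℕ) = Complex.I ^ (k : ℕ) := by
      rw [pow_add]; linear_combination heq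
    have h2 : ((-1 : ℂ)) ^ ((k : ℕ) + n) = 1 := mul_right_cancel₀ (Ipow_ne _) (by rw [h1, one_mul])
    exact (neg_one_pow_eq_one_iff_even (by norm_num : (-1 : ℂ) ≠ 1)).mp h2
  refine ⟨Complex.I ^ ((k : ℕ) + 3 * n), (a, b), ?_, ?_⟩
  · obtain ⟨t, ht⟩ := heven
    have ht2 : (k : ℕ) + 3 * n = 2 * (t + n) := by omega
    rw [ht2, pow_mul, Complex.I_sq]
    exact neg_one_pow_pm _
  · rw [DM_eq_EM, smul_smul, ← pow_add]

lemma commutant_scalar {W : Matrix (V m) (V m) ℂ}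
    (h : ∀ c : V m × V m, W * EM c = EM c * W) : ∃ lam : ℂ, W = lam • 1 := by
  have hEb : ∀ b : V m, EM ((0 : V m), b) = DM 0 b := by
    intro b; unfold EM; simp [dotN_zero_left]
  have hEa : ∀ a : V m, EM (a, (0 : V m)) = DM a 0 := by
    intro a; unfold EM; simp [dotN_zero_right]
  have hoff : ∀ u v, u ≠ v → W u v = 0 := by
    intro u v huv
    obtain ⟨i, hi⟩ : ∃ i, u i ≠ v i := by
      by_contra hno; push_neg at hno; exact huv (funext hno)
    have h1 := congrFun (congrFun (h ((0 : V m), Pi.single i 1)) u) v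
    rw [hEb] at h1
    have hL : (W * DM 0 (Pi.single i 1)) u v = W u v * (-1 : ℂ) ^ (v i).val := by
      rw [Matrix.mul_apply, Finset.sum_eq_single v]
      · rw [show DM 0 (Pi.single i 1) v v = (-1 : ℂ) ^ (v i).val by
          simp [DM, dotN_comm, dotN_single_right]]
      · intro t _ ht
        rw [show DM 0 (Pi.single i 1) t v = 0 by simp [DM, ht], mul_zero]
      · intro hh; exact absurd (Finset.mem_univ _) hh
    have hR : (DM 0 (Pi.single i 1) * W) u v = (-1 : ℂ) ^ (u i).val * W u v := by
      rw [Matrix.mul_apply, Finset.sum_eq_single u]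
      · rw [show DM 0 (Pi.single i 1) u u = (-1 : ℂ) ^ (u i).val by
          simp [DM, dotN_comm, dotN_single_right]]
      · intro t _ ht
        rw [show DM 0 (Pi.single i 1) u t = 0 by simp [DM, Ne.symm ht], zero_mul]
      · intro hh; exact absurd (Finset.mem_univ _) hh
    rw [hL, hR] at h1
    have hval : (u i).val ≠ (v i).val := fun hc => hi (zval_inj hc)
    have hu2 : (u i).val = 0 ∨ (u i).val = 1 := by have := ZMod.val_lt (u i); omega
    have hv2 : (v i).val = 0 ∨ (v i).val = 1 := by have := ZMod.val_lt (v i); omega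
    have hsign : ((-1 : ℂ)) ^ (v i).val = -((-1 : ℂ)) ^ (u i).val := by
      rcases hu2 with h2 | h2 <;> rcases hv2 with h3 | h3
      · exact absurd (h2.trans h3.symm) hval
      · rw [h2, h3]; norm_num
      · rw [h2, h3]; norm_num
      · exact absurd (h2.trans h3.symm) hval
    rw [hsign] at h1
    have h2 : (2 : ℂ) * ((-1) ^ (u i).val * W u v) = 0 := by linear_combination -h1
    rcases mul_eq_zero.mp h2 with hc | hc
    · norm_num at hc
    · rcases mul_eq_zero.mp hc with hc2 | hc2
      · exact absurd hc2 (pow_ne_zero _ (by norm_num))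
      · exact hc2
  have hdiag : ∀ a : V m, W a a = W 0 0 := by
    intro a
    have haa : a + a = 0 := funext fun i => zadd_self (a i)
    have h1 := congrFun (congrFun (h (a, (0 : V m))) 0) a
    rw [hEa] at h1
    have hL : (W * DM a 0) 0 a = W 0 (a + a) := by
      rw [Matrix.mul_apply, Finset.sum_eq_single (a + a)]
      · rw [show DM a 0 (a + a) a = 1 by simp [DM, dotN_zero_left], mul_one]
      · intro t _ ht
        rw [show DM a 0 t a = 0 by simp [DM, dotN_zero_left]; intro hc; exact absurd hc ht,
          mul_zero]
      · intro hh; exact absurd (Finset.mem_univ _) hh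
    have hR : (DM a 0 * W) 0 a = W a a := by
      rw [Matrix.mul_apply, Finset.sum_eq_single a]
      · rw [show DM a 0 0 a = 1 by simp [DM, dotN_zero_left, haa], one_mul]
      · intro t _ ht
        rw [show DM a 0 0 t = 0 by
            simp only [DM, Matrix.of_apply, dotN_zero_left, pow_zero, ite_eq_right_iff]
            intro hc
            have hta : t = a := by
              rw [show t = t + a + a from by rw [add_assoc, haa, add_zero], ← hc, zero_add]
            exact (ht hta).elim
          , zero_mul]
      · intro hh; exact absurd (Finset.mem_univ _) hh
    rw [hL, hR] at h1
    rw [← h1, haa]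
  refine ⟨W 0 0, ?_⟩
  ext u w
  by_cases huw : u = w
  · subst huw; rw [hdiag u, Matrix.smul_apply, Matrix.one_apply_eq, smul_eq_mul, mul_one]
  · rw [hoff u w huw, Matrix.smul_apply, Matrix.one_apply_ne huw, smul_eq_mul, mul_zero]

lemma zval_one' {x : ZMod 2} (h : x ≠ 0) : x.val = 1 := by revert x; decide

lemma exists_anti {g : V m × V m} (hg : g ≠ 0) : ∃ d, ((-1 : ℂ)) ^ sdot g d = -1 := by
  have : g.1 ≠ 0 ∨ g.2 ≠ 0 := by
    by_contra hno; push_neg at hno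
    exact hg (Prod.ext hno.1 hno.2)
  rcases this with h1 | h2
  · obtain ⟨i, hi⟩ : ∃ i, g.1 i ≠ 0 := by
      by_contra hno; push_neg at hno; exact h1 (funext hno)
    refine ⟨((0 : V m), Pi.single i 1), ?_⟩
    unfold sdot
    simp only [dotN_zero_right, dotN_single_right, add_zero, zval_one' hi, pow_one]
  · obtain ⟨i, hi⟩ : ∃ i, g.2 i ≠ 0 := by
      by_contra hno; push_neg at hno; exact h2 (funext hno)
    refine ⟨(Pi.single i 1, (0 : V m)), ?_⟩
    unfold sdot
    simp only [dotN_zero_right, dotN_single_right, zero_add, zval_one' hi, pow_one]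

lemma sgn_sdot_add_right (c d d' : V m × V m) :
    ((-1 : ℂ)) ^ sdot c (d + d') = (-1) ^ sdot c d * (-1) ^ sdot c d' := by
  rw [← pow_add]
  apply sgn_congr
  unfold sdot
  push_cast
  simp only [dotN_cast, Prod.fst_add, Prod.snd_add, Pi.add_apply, mul_add,
    Finset.sum_add_distrib]
  ring

def tau : ℂ := ((Real.sqrt 2 : ℝ) : ℂ)⁻¹

lemma tau_mul_self : tau * tau * 2 = 1 := by
  unfold tau
  rw [← mul_inv, ← Complex.ofReal_mul, Real.mul_self_sqrt (by norm_num)]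
  norm_num

lemma tau_star : star tau = tau := by
  unfold tau
  rw [star_inv₀, Complex.star_def, Complex.conj_ofReal]

lemma conj_core (A B X : Matrix (V m) (V m) ℂ) (sa sb : ℂ)
    (hA2 : A * A = 1) (hB2 : B * B = 1) (hBA : B * A = -(A * B))
    (ha : A * X = sa • (X * A)) (hb : B * X = sb • (X * B)) :
    (A + B) * X * (A + B) = (sa + sb) • X + (sa - sb) • (X * (A * B)) := by
  have h1 : (A + B) * X = sa • (X * A) + sb • (X * B) := by rw [add_mul, ha, hb]
  rw [h1, add_mul, smul_mul_assoc, smul_mul_assoc, mul_add, mul_add]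
  rw [mul_assoc X A A, hA2, mul_one, mul_assoc X B B, hB2, mul_one]
  rw [mul_assoc X A B, mul_assoc X B A, hBA, mul_neg, ← mul_assoc X A B]
  rw [mul_assoc X A B]
  module

lemma sq_core (A B : Matrix (V m) (V m) ℂ)
    (hA2 : A * A = 1) (hB2 : B * B = 1) (hBA : B * A = -(A * B)) :
    (A + B) * (A + B) = (2 : ℂ) • 1 := by
  rw [add_mul, mul_add, mul_add, hA2, hB2, hBA]
  module

def TV {m : ℕ} (u v : V m × V m) (zu zv : ℂ) : Matrix (V m) (V m) ℂ :=
  tau • (zu • EM u + zv • EM v)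


end helpers
section tv
variable {m : ℕ}

lemma pm_mul_self {z : ℂ} (h : z = 1 ∨ z = -1) : z * z = 1 := by
  rcases h with rfl | rfl <;> norm_num

lemma pm_star {z : ℂ} (h : z = 1 ∨ z = -1) : star z = z := by
  rcases h with rfl | rfl <;> simp

lemma pm_ne {z : ℂ} (h : z = 1 ∨ z = -1) : z ≠ 0 := by
  rcases h with rfl | rfl <;> norm_num

lemma pmEM_sq (w : V m × V m) {z : ℂ} (hz : z = 1 ∨ z = -1) :
    (z • EM w) * (z • EM w) = 1 := by
  rw [smul_mul_assoc, mul_smul_comm, smul_smul, EM_mul_self, pm_mul_self hz, one_smul]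

lemma pmEM_BA {u v : V m × V m} {zu zv : ℂ}
    (hanti : ((-1 : ℂ)) ^ sdot u v = -1) :
    (zv • EM v) * (zu • EM u) = -((zu • EM u) * (zv • EM v)) := by
  rw [smul_mul_assoc, mul_smul_comm, smul_mul_assoc, mul_smul_comm,
    EM_comm v u, sdot_comm v u, hanti, neg_one_smul]
  module

lemma pmEM_comm (u : V m × V m) (zu : ℂ) (g : V m × V m) :
    (zu • EM u) * EM g = ((-1 : ℂ) ^ sdot u g) • (EM g * (zu • EM u)) := by
  rw [smul_mul_assoc, EM_comm u g, mul_smul_comm]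
  module

lemma TV_herm {u v : V m × V m} {zu zv : ℂ} (hzu : zu = 1 ∨ zu = -1)
    (hzv : zv = 1 ∨ zv = -1) : (TV u v zu zv)ᴴ = TV u v zu zv := by
  unfold TV
  rw [Matrix.conjTranspose_smul, Matrix.conjTranspose_add, Matrix.conjTranspose_smul,
    Matrix.conjTranspose_smul, EM_herm, EM_herm, tau_star, pm_star hzu, pm_star hzv]

lemma TV_sq {u v : V m × V m} {zu zv : ℂ} (hzu : zu = 1 ∨ zu = -1)
    (hzv : zv = 1 ∨ zv = -1) (hanti : ((-1 : ℂ)) ^ sdot u v = -1) :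
    TV u v zu zv * TV u v zu zv = 1 := by
  unfold TV
  rw [smul_mul_assoc, mul_smul_comm, smul_smul]
  rw [sq_core _ _ (pmEM_sq u hzu) (pmEM_sq v hzv) (pmEM_BA hanti)]
  rw [smul_smul, tau_mul_self, one_smul]

lemma TV_unitary {u v : V m × V m} {zu zv : ℂ} (hzu : zu = 1 ∨ zu = -1)
    (hzv : zv = 1 ∨ zv = -1) (hanti : ((-1 : ℂ)) ^ sdot u v = -1) :
    TV u v zu zv ∈ Matrix.unitaryGroup (V m) ℂ := by
  rw [Matrix.mem_unitaryGroup_iff, Matrix.star_eq_conjTranspose, TV_herm hzu hzv,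
    TV_sq hzu hzv hanti]

lemma TV_maps {u v : V m × V m} {zu zv : ℂ} (hzu : zu = 1 ∨ zu = -1)
    (hzv : zv = 1 ∨ zv = -1) (hanti : ((-1 : ℂ)) ^ sdot u v = -1) :
    TV u v zu zv * (zu • EM u) * (TV u v zu zv)ᴴ = zv • EM v := by
  rw [TV_herm hzu hzv]
  unfold TV
  rw [smul_mul_assoc, smul_mul_assoc, mul_smul_comm, smul_smul]
  have hA2 := pmEM_sq u hzu
  have hb : (zv • EM v) * (zu • EM u) = (-1 : ℂ) • ((zu • EM u) * (zv • EM v)) := by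
    rw [neg_one_smul]; exact pmEM_BA hanti
  rw [conj_core (zu • EM u) (zv • EM v) (zu • EM u) 1 (-1) hA2 (pmEM_sq v hzv)
    (pmEM_BA hanti) (by rw [one_smul]) hb]
  rw [show (1 + (-1 : ℂ)) = 0 by norm_num, show (1 - (-1 : ℂ)) = 2 by norm_num,
    zero_smul, zero_add, ← mul_assoc, hA2, one_mul, smul_smul]
  rw [show tau * tau * 2 = 1 from tau_mul_self, one_smul]

lemma TV_conj_mem {u v : V m × V m} {zu zv : ℂ} (hzu : zu = 1 ∨ zu = -1)
    (hzv : zv = 1 ∨ zv = -1) (hanti : ((-1 : ℂ)) ^ sdot u v = -1) :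
    ∀ W ∈ HW m, TV u v zu zv * W * (TV u v zu zv)ᴴ ∈ HW m := by
  intro W hW
  obtain ⟨k, a, b, rfl⟩ := hW
  rw [TV_herm hzu hzv, mul_smul_comm, smul_mul_assoc]
  apply HW_Ismul
  rw [DM_eq_EM, mul_smul_comm, smul_mul_assoc]
  apply HW_Ismul
  unfold TV
  rw [smul_mul_assoc, smul_mul_assoc, mul_smul_comm, smul_smul]
  rw [conj_core (zu • EM u) (zv • EM v) (EM (a, b)) _ _ (pmEM_sq u hzu)
    (pmEM_sq v hzv) (pmEM_BA hanti) (pmEM_comm u zu (a, b)) (pmEM_comm v zv (a, b))]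
  have hAB : (zu • EM u) * (zv • EM v) ∈ HW m :=
    HW_mul (HW_pm hzu (EM_mem_HW u)) (HW_pm hzv (EM_mem_HW v))
  rcases neg_one_pow_pm (sdot u (a, b)) with hsa | hsa <;>
    rcases neg_one_pow_pm (sdot v (a, b)) with hsb | hsb <;> rw [hsa, hsb]
  · rw [sub_self, zero_smul, add_zero, smul_smul,
      show tau * tau * (1 + 1) = 1 by rw [show (1 + 1 : ℂ) = 2 by norm_num]; exact tau_mul_self,
      one_smul]
    exact EM_mem_HW _
  · rw [show (1 + (-1 : ℂ)) = 0 by norm_num, show (1 - (-1 : ℂ)) = 2 by norm_num,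
      zero_smul, zero_add, smul_smul, tau_mul_self, one_smul]
    exact HW_mul (EM_mem_HW _) hAB
  · rw [show ((-1 : ℂ) + 1) = 0 by norm_num, show ((-1 : ℂ) - 1) = -2 by norm_num,
      zero_smul, zero_add, smul_smul,
      show tau * tau * (-2) = -1 by rw [mul_neg, tau_mul_self]]
    exact HW_pm (Or.inr rfl) (HW_mul (EM_mem_HW _) hAB)
  · rw [show ((-1 : ℂ) + -1) = -2 by norm_num, sub_self, zero_smul, add_zero,
      smul_smul, show tau * tau * (-2) = -1 by rw [mul_neg, tau_mul_self]]
    exact HW_pm (Or.inr rfl) (EM_mem_HW _)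
end tv



section main
variable {m : ℕ}

lemma clifford_mul {G1 G2 : Matrix (V m) (V m) ℂ} (h1 : IsClifford G1)
    (h2 : IsClifford G2) : IsClifford (G1 * G2) := by
  refine ⟨mul_mem h1.1 h2.1, ?_⟩
  intro W hW
  have hmem := h1.2 _ (h2.2 W hW)
  have heq : G1 * G2 * W * (G1 * G2)ᴴ = G1 * (G2 * W * G2ᴴ) * G1ᴴ := by
    rw [Matrix.conjTranspose_mul]
    simp only [mul_assoc]
  rw [heq]
  exact hmem

lemma EM_eq_smul_one {g : V m × V m} {w : ℂ} (h : EM g = w • 1) : g = 0 := by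
  by_cases h1 : g.1 = 0
  · by_cases h2 : g.2 = 0
    · exact Prod.ext h1 h2
    · exfalso
      obtain ⟨i, hi⟩ : ∃ i, g.2 i ≠ 0 := by
        by_contra hno; push_neg at hno; exact h2 (funext hno)
      have hEg : EM g = DM 0 g.2 := by
        unfold EM; rw [h1, dotN_zero_left, pow_zero, one_smul]
      have hmat : DM 0 g.2 = w • 1 := by rw [← hEg]; exact h
      have e00 := congrFun (congrFun hmat 0) 0
      have eii := congrFun (congrFun hmat (Pi.single i 1)) (Pi.single i 1)
      have hL00 : DM (0 : V m) g.2 0 0 = 1 := by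
        simp only [DM, Matrix.of_apply]
        rw [if_pos (by rw [add_zero]), dotN_zero_right, pow_zero]
      have hLii : DM (0 : V m) g.2 (Pi.single i 1) (Pi.single i 1) = -1 := by
        simp only [DM, Matrix.of_apply]
        rw [if_pos (by rw [add_zero]), dotN_single_right, zval_one' hi, pow_one]
      have hR : ∀ u : V m, ((w • (1 : Matrix (V m) (V m) ℂ))) u u = w := fun u => by
        rw [Matrix.smul_apply, Matrix.one_apply_eq, smul_eq_mul, mul_one]
      rw [hL00, hR] at e00
      rw [hLii, hR] at eii
      rw [← e00] at eii
      norm_num at eii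
  · exfalso
    have hE := congrFun (congrFun h g.1) 0
    have hL : EM g g.1 0 = Complex.I ^ dotN g.1 g.2 := by
      simp only [EM, Matrix.smul_apply, DM, Matrix.of_apply, smul_eq_mul]
      rw [if_pos (by rw [zero_add]), dotN_zero_right, pow_zero, mul_one]
    have hR : ((w • (1 : Matrix (V m) (V m) ℂ))) g.1 0 = 0 := by
      rw [Matrix.smul_apply, Matrix.one_apply_ne h1, smul_zero]
    rw [hL, hR] at hE
    exact Ipow_ne _ hE

lemma char_decomp (t : V m → ZMod 2) (ht : ∀ x y, t (x + y) = t x + t y) (x : V m) :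
    t x = ∑ i, t (Pi.single i 1) * x i := by
  have hx : x = ∑ i, Pi.single i (x i) := (Finset.univ_sum_single x).symm
  calc t x = (AddMonoidHom.mk' t ht) x := rfl
    _ = ∑ i, (AddMonoidHom.mk' t ht) (Pi.single i (x i)) := by
        conv_lhs => rw [hx]
        exact map_sum _ _ _
    _ = ∑ i, t (Pi.single i 1) * x i := by
        apply Finset.sum_congr rfl
        intro i _
        rcases ztwo (x i) with hcase | hcase <;> rw [hcase]
        · rw [Pi.single_zero, map_zero, mul_zero]
        · rw [mul_one]; rfl

end main

section aux
variable {m : ℕ}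

lemma aux1 (hm : 1 ≤ m) (C : Matrix (V m) (V m) ℂ) (hC : C ∈ CH m 2) :
    ∃ (e f : V m × V m) (lam : ℂ), e ≠ 0 ∧ f ≠ 0 ∧ (lam = 1 ∨ lam = -1) ∧
      C * EM f * Cᴴ = lam • EM e := by
  obtain ⟨hCu, hC2⟩ := hC
  have hCC : Cᴴ * C = 1 := by
    have := Matrix.mem_unitaryGroup_iff'.mp hCu
    rwa [Matrix.star_eq_conjTranspose] at this
  have hCC' : C * Cᴴ = 1 := by
    have := Matrix.mem_unitaryGroup_iff.mp hCu
    rwa [Matrix.star_eq_conjTranspose] at this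
  have hsand : ∀ X Y : Matrix (V m) (V m) ℂ,
      (C * X * Cᴴ) * (C * Y * Cᴴ) = C * (X * Y) * Cᴴ := by
    intro X Y
    simp only [mul_assoc]
    rw [← mul_assoc Cᴴ C, hCC, one_mul]
  have hGherm : ∀ c : V m × V m, (C * EM c * Cᴴ)ᴴ = C * EM c * Cᴴ := by
    intro c
    rw [Matrix.conjTranspose_mul, Matrix.conjTranspose_mul,
      Matrix.conjTranspose_conjTranspose, EM_herm, ← mul_assoc]
  have hGsq : ∀ c : V m × V m, (C * EM c * Cᴴ) * (C * EM c * Cᴴ) = 1 := by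
    intro c; rw [hsand, EM_mul_self, mul_one, hCC']
  have hconj : ∀ c e : V m × V m, ∃ (zz : ℂ) (g : V m × V m), (zz = 1 ∨ zz = -1) ∧
      (C * EM c * Cᴴ) * EM e * (C * EM c * Cᴴ) = zz • EM g := by
    intro c e
    obtain ⟨hGu, hG2⟩ := hC2 _ (EM_mem_HW c)
    have hmem : (C * EM c * Cᴴ) * EM e * (C * EM c * Cᴴ)ᴴ ∈ CH m 0 := hG2 _ (EM_mem_HW e)
    rw [hGherm c] at hmem
    refine HW_herm hmem ?_
    have hg := hGherm c
    generalize hGG : C * EM c * Cᴴ = G at hg ⊢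
    rw [Matrix.conjTranspose_mul, Matrix.conjTranspose_mul, hg, EM_herm, ← mul_assoc]
  choose zz Φ hzz hΦ using hconj
  have hlaw : ∀ c d e : V m × V m,
      Φ (c + d) e = Φ c (Φ d e) ∧ zz (c + d) e = zz c (Φ d e) * zz d e := by
    intro c d e
    obtain ⟨k, hk⟩ := EM_mul c d
    have hprod : (C * EM c * Cᴴ) * (C * EM d * Cᴴ)
        = (Complex.I ^ k) • (C * EM (c + d) * Cᴴ) := by
      rw [hsand, hk, mul_smul_comm, smul_mul_assoc]
    have hprod' : (C * EM d * Cᴴ) * (C * EM c * Cᴴ)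
        = (star (Complex.I ^ k)) • (C * EM (c + d) * Cᴴ) := by
      have h2 := congrArg Matrix.conjTranspose hprod
      rw [Matrix.conjTranspose_mul, hGherm, hGherm, Matrix.conjTranspose_smul, hGherm] at h2
      exact h2
    have h1 : (C * EM c * Cᴴ) * ((C * EM d * Cᴴ) * EM e * (C * EM d * Cᴴ)) * (C * EM c * Cᴴ)
        = (C * EM (c + d) * Cᴴ) * EM e * (C * EM (c + d) * Cᴴ) := by
      have hL : (C * EM c * Cᴴ) * ((C * EM d * Cᴴ) * EM e * (C * EM d * Cᴴ)) * (C * EM c * Cᴴ)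
          = ((C * EM c * Cᴴ) * (C * EM d * Cᴴ)) * EM e * ((C * EM d * Cᴴ) * (C * EM c * Cᴴ)) := by
        simp only [mul_assoc]
      rw [hL, hprod, hprod', smul_mul_assoc, smul_mul_assoc, mul_smul_comm, smul_smul,
        Istar, one_smul]
    have hmain : zz (c + d) e • EM (Φ (c + d) e)
        = (zz c (Φ d e) * zz d e) • EM (Φ c (Φ d e)) := by
      rw [← hΦ (c + d) e, ← h1, hΦ d e, mul_smul_comm, smul_mul_assoc, hΦ c (Φ d e),
        smul_smul, mul_comm (zz d e)]
    have hres := EM_smul_inj hmain (pm_ne (hzz _ _))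
    exact ⟨hres.1, hres.2⟩
  have hΦ0 : ∀ e, Φ 0 e = e := by
    intro e
    have h0 : C * EM (0 : V m × V m) * Cᴴ = 1 := by rw [EM_zero, mul_one, hCC']
    have h1 : (1 : ℂ) • EM e = zz 0 e • EM (Φ 0 e) := by
      rw [one_smul, ← hΦ 0 e, h0, one_mul, mul_one]
    exact ((EM_smul_inj h1 one_ne_zero).1).symm
  have hΦz : ∀ c, Φ c 0 = 0 := by
    intro c
    have h1 : (1 : ℂ) • EM (0 : V m × V m) = zz c 0 • EM (Φ c 0) := by
      rw [one_smul, ← hΦ c 0, EM_zero, mul_one, hGsq c]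
    exact ((EM_smul_inj h1 one_ne_zero).1).symm
  -- fixed point via p-group action
  letI : SMul (Multiplicative (V m × V m)) (V m × V m) := ⟨fun c e => Φ c.toAdd e⟩
  letI : MulAction (Multiplicative (V m × V m)) (V m × V m) :=
    { one_smul := fun e => hΦ0 e
      mul_smul := fun c d e => (hlaw c.toAdd d.toAdd e).1 }
  have haddself : ∀ x : V m × V m, x + x = 0 := by
    intro x
    have hx1 : x.1 + x.1 = 0 := funext fun i => zadd_self _
    have hx2 : x.2 + x.2 = 0 := funext fun i => zadd_self _
    exact Prod.ext hx1 hx2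
  have hPG : IsPGroup 2 (Multiplicative (V m × V m)) := by
    intro g
    refine ⟨1, ?_⟩
    have hg2 : g * g = 1 := by
      apply Multiplicative.toAdd.injective
      rw [toAdd_mul, toAdd_one]
      exact haddself _
    rw [pow_one, pow_two]
    exact hg2
  haveI : Fintype ↥(MulAction.fixedPoints (Multiplicative (V m × V m)) (V m × V m)) :=
    Fintype.ofFinite _
  have hmod := hPG.card_modEq_card_fixedPoints (V m × V m)
  have h0mem : (0 : V m × V m) ∈ MulAction.fixedPoints (Multiplicative (V m × V m))
      (V m × V m) := fun g => hΦz _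
  have hcard1 : Nat.card (V m × V m) % 2 = 0 := by
    rw [Nat.card_eq_fintype_card, Fintype.card_prod, Fintype.card_fun, ZMod.card,
      Fintype.card_fin]
    have h2m : 2 ^ m % 2 = 0 := by
      rcases Nat.exists_eq_add_of_le hm with ⟨t, rfl⟩
      rw [pow_add, pow_one]
      omega
    rw [Nat.mul_mod, h2m]
  have hcard2 : Nat.card
      ↥(MulAction.fixedPoints (Multiplicative (V m × V m)) (V m × V m)) % 2 = 0 := by
    unfold Nat.ModEq at hmod
    omega
  haveI : Nonempty ↥(MulAction.fixedPoints (Multiplicative (V m × V m)) (V m × V m)) :=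
    ⟨⟨0, h0mem⟩⟩
  have hlt : 1 < Fintype.card
      ↥(MulAction.fixedPoints (Multiplicative (V m × V m)) (V m × V m)) := by
    rw [← Nat.card_eq_fintype_card]
    have hpos : 0 < Nat.card
        ↥(MulAction.fixedPoints (Multiplicative (V m × V m)) (V m × V m)) := Nat.card_pos
    omega
  obtain ⟨x, hx⟩ := Fintype.exists_ne_of_one_lt_card hlt ⟨0, h0mem⟩
  have he0 : (x : V m × V m) ≠ 0 := fun hh => hx (Subtype.ext hh)
  have hefix : ∀ c : V m × V m, Φ c (x : V m × V m) = (x : V m × V m) := by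
    intro c
    exact x.2 (Multiplicative.ofAdd c)
  set e : V m × V m := (x : V m × V m) with he
  -- sign character
  have hsz : ∀ c, (C * EM c * Cᴴ) * EM e * (C * EM c * Cᴴ) = zz c e • EM e := by
    intro c
    rw [hΦ c e, hefix c]
  have hmult : ∀ c d, zz (c + d) e = zz c e * zz d e := by
    intro c d
    have := (hlaw c d e).2
    rwa [hefix d] at this
  classical
  set s : V m × V m → ZMod 2 := fun c => if zz c e = 1 then 0 else 1 with hs
  have hne11 : (1 : ℂ) ≠ -1 := by norm_num
  have hne11' : (-1 : ℂ) ≠ 1 := by norm_num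
  have honeone : (1 : ZMod 2) + 1 = 0 := by decide
  have hs_add : ∀ c d, s (c + d) = s c + s d := by
    intro c d
    have h3 := hmult c d
    rcases hzz c e with h1 | h1 <;> rcases hzz d e with h2 | h2 <;>
      rw [h1, h2] at h3 <;> norm_num at h3 <;>
      simp [hs, h3, h1, h2, hne11, hne11', honeone]
  have hs_val : ∀ c, zz c e = ((-1 : ℂ)) ^ (s c).val := by
    intro c
    rcases hzz c e with h1 | h1
    · simp [hs, h1]
    · simp [hs, h1, hne11, hne11', show ((1 : ZMod 2)).val = 1 from rfl]
  -- build f realizing the character via the symplectic form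
  set f : V m × V m := (fun i => s ((0 : V m), Pi.single i 1),
    fun i => s (Pi.single i 1, (0 : V m))) with hfdef
  have hchar : ∀ c, zz c e = ((-1 : ℂ)) ^ sdot f c := by
    intro c
    have hc : c = (c.1, (0 : V m)) + ((0 : V m), c.2) := by
      apply Prod.ext <;> simp
    have hsplit : s c = s (c.1, (0 : V m)) + s ((0 : V m), c.2) := by
      have h2 := hs_add (c.1, (0 : V m)) ((0 : V m), c.2)
      rw [← hc] at h2
      exact h2
    have ht1 : s (c.1, (0 : V m)) = ∑ i, s (Pi.single i 1, (0 : V m)) * c.1 i := by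
      refine char_decomp (fun y => s (y, (0 : V m))) (fun a b => ?_) c.1
      have h3 : ((a + b : V m), (0 : V m)) = (a, (0 : V m)) + (b, (0 : V m)) := by
        apply Prod.ext <;> simp
      show s ((a + b : V m), (0 : V m)) = s (a, (0 : V m)) + s (b, (0 : V m))
      rw [h3]
      exact hs_add _ _
    have ht2 : s ((0 : V m), c.2) = ∑ i, s ((0 : V m), Pi.single i 1) * c.2 i := by
      refine char_decomp (fun y => s ((0 : V m), y)) (fun a b => ?_) c.2
      have h3 : ((0 : V m), (a + b : V m)) = ((0 : V m), a) + ((0 : V m), b) := by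
        apply Prod.ext <;> simp
      show s ((0 : V m), (a + b : V m)) = s ((0 : V m), a) + s ((0 : V m), b)
      rw [h3]
      exact hs_add _ _
    have hcast : ((sdot f c : ℕ) : ZMod 2) = s c := by
      unfold sdot
      push_cast
      rw [dotN_cast, dotN_cast, hsplit, ht1, ht2]
      exact add_comm _ _
    rw [hs_val c]
    exact sgn_congr (by rw [zval]; exact hcast.symm)
  -- the matrix Cᴴ E(e) C commutes with everything up to the character
  have hconjtrans : ∀ X : Matrix (V m) (V m) ℂ,
      Cᴴ * ((C * X * Cᴴ) * EM e * (C * X * Cᴴ)) * C = X * (Cᴴ * EM e * C) * X := by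
    intro X
    simp only [mul_assoc]
    rw [hCC, mul_one, ← mul_assoc Cᴴ C, hCC, one_mul]
  have hMconj : ∀ c, EM c * (Cᴴ * EM e * C) * EM c = zz c e • (Cᴴ * EM e * C) := by
    intro c
    have h2 := congrArg (fun Y => Cᴴ * Y * C) (hsz c)
    rw [hconjtrans (EM c)] at h2
    rw [h2, mul_smul_comm, smul_mul_assoc]
  have hMcomm : ∀ c, EM c * (Cᴴ * EM e * C) = zz c e • ((Cᴴ * EM e * C) * EM c) := by
    intro c
    have h2 := congrArg (fun Y => Y * EM c) (hMconj c)
    rw [mul_assoc (EM c * (Cᴴ * EM e * C)), EM_mul_self, mul_one, smul_mul_assoc] at h2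
    exact h2
  have hWcomm : ∀ c, (EM f * (Cᴴ * EM e * C)) * EM c = EM c * (EM f * (Cᴴ * EM e * C)) := by
    have key : ∀ M : Matrix (V m) (V m) ℂ, (∀ c, EM c * M = zz c e • (M * EM c)) →
        ∀ c, (EM f * M) * EM c = EM c * (EM f * M) := by
      intro M hMc c
      have h1 : EM c * (EM f * M)
          = ((-1 : ℂ) ^ sdot c f * zz c e) • ((EM f * M) * EM c) := by
        calc EM c * (EM f * M) = (EM c * EM f) * M := by rw [← mul_assoc]
          _ = ((-1 : ℂ) ^ sdot c f) • ((EM f * EM c) * M) := by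
              rw [EM_comm c f, smul_mul_assoc]
          _ = ((-1 : ℂ) ^ sdot c f) • (EM f * (EM c * M)) := by rw [mul_assoc]
          _ = ((-1 : ℂ) ^ sdot c f) • (EM f * (zz c e • (M * EM c))) := by rw [hMc c]
          _ = ((-1 : ℂ) ^ sdot c f * zz c e) • (EM f * (M * EM c)) := by
              rw [mul_smul_comm, smul_smul]
          _ = ((-1 : ℂ) ^ sdot c f * zz c e) • ((EM f * M) * EM c) := by rw [mul_assoc]
      have hsc : ((-1 : ℂ) ^ sdot c f * zz c e) = 1 := by
        rw [hchar c, sdot_comm c f, ← mul_pow]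
        norm_num
      rw [h1, hsc, one_smul]
    exact key _ hMcomm
  obtain ⟨lam, hlam⟩ := commutant_scalar hWcomm
  have hM : (Cᴴ * EM e * C) = lam • EM f := by
    have h2 := congrArg (fun Y => EM f * Y) hlam
    rw [← mul_assoc, EM_mul_self, one_mul] at h2
    rw [h2, mul_smul_comm, mul_one]
  have hMsq : (Cᴴ * EM e * C) * (Cᴴ * EM e * C) = 1 := by
    simp only [mul_assoc]
    rw [← mul_assoc C Cᴴ, hCC', one_mul, ← mul_assoc (EM e) (EM e), EM_mul_self,
      one_mul, hCC]
  have hlamsq : lam * lam = 1 := by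
    have h2 := hMsq
    rw [hM, smul_mul_assoc, mul_smul_comm, smul_smul, EM_mul_self] at h2
    have h3 := congrFun (congrFun h2 0) 0
    simpa using h3
  have hlampm := mul_self_eq_one_iff.mp hlamsq
  have hCMC : C * (Cᴴ * EM e * C) * Cᴴ = EM e := by
    simp only [mul_assoc]
    rw [hCC', mul_one, ← mul_assoc, hCC', one_mul]
  have hfinal : C * EM f * Cᴴ = lam • EM e := by
    have h2 : C * (Cᴴ * EM e * C) * Cᴴ = C * (lam • EM f) * Cᴴ := by rw [← hM]
    rw [hCMC, mul_smul_comm, smul_mul_assoc] at h2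
    rw [h2, smul_smul, pm_mul_self hlampm, one_smul]
  have hf0 : f ≠ 0 := by
    intro hff
    have h2 : EM e = lam • (1 : Matrix (V m) (V m) ℂ) := by
      rw [← hCMC, hM, hff, EM_zero, mul_smul_comm, smul_mul_assoc, mul_one, hCC']
    exact he0 (EM_eq_smul_one h2)
  exact ⟨e, f, lam, he0, hf0, hlampm, hfinal⟩

end aux


/-- every `C ∈ C^(3)` maps some nontrivial Pauli to a Pauli under
conjugation; consequently there is a Clifford `G` such that `G·C` commutes with some
nontrivial Hermitian Pauli.  (Here `CH m 2 = C^(3)`.) -/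
theorem stmt14 {m : ℕ} (hm : 1 ≤ m) (C : Matrix (V m) (V m) ℂ) (hC : C ∈ CH m 2) :
    (∃ c : V m × V m, c ≠ 0 ∧ C * EM c * Cᴴ ∈ HW m) ∧
    ∃ G : Matrix (V m) (V m) ℂ, IsClifford G ∧
      ∃ c : V m × V m, c ≠ 0 ∧ (G * C) * EM c = EM c * (G * C) := by
  obtain ⟨e, f, lam, he0, hf0, hlam, hkey⟩ := aux1 hm C hC
  have hCu : C ∈ Matrix.unitaryGroup (V m) ℂ := hC.1
  constructor
  · exact ⟨f, hf0, by rw [hkey]; exact HW_pm hlam (EM_mem_HW e)⟩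
  · obtain ⟨d1, hd1⟩ := exists_anti he0
    obtain ⟨d2, hd2⟩ := exists_anti hf0
    have hd : ∃ d, ((-1 : ℂ)) ^ sdot e d = -1 ∧ ((-1 : ℂ)) ^ sdot f d = -1 := by
      rcases neg_one_pow_pm (sdot f d1) with h | h
      · rcases neg_one_pow_pm (sdot e d2) with h' | h'
        · refine ⟨d1 + d2, ?_, ?_⟩
          · rw [sgn_sdot_add_right, hd1, h']
            norm_num
          · rw [sgn_sdot_add_right, h, hd2]
            norm_num
        · exact ⟨d2, h', hd2⟩
      · exact ⟨d1, hd1, h⟩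
    obtain ⟨d, hde, hdf⟩ := hd
    have hdf' : ((-1 : ℂ)) ^ sdot d f = -1 := by rw [sdot_comm d f]; exact hdf
    have hone : (1 : ℂ) = 1 ∨ (1 : ℂ) = -1 := Or.inl rfl
    have hT1 : IsClifford (TV e d lam 1) :=
      ⟨TV_unitary hlam hone hde, TV_conj_mem hlam hone hde⟩
    have hT2 : IsClifford (TV d f 1 1) :=
      ⟨TV_unitary hone hone hdf', TV_conj_mem hone hone hdf'⟩
    refine ⟨TV d f 1 1 * TV e d lam 1, clifford_mul hT2 hT1, f, hf0, ?_⟩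
    set T1 := TV e d lam 1 with hT1def
    set T2 := TV d f 1 1 with hT2def
    have hstep : T2 * T1 * C * EM f * ((T2 * T1 * C))ᴴ
        = T2 * (T1 * (C * EM f * Cᴴ) * T1ᴴ) * T2ᴴ := by
      rw [Matrix.conjTranspose_mul, Matrix.conjTranspose_mul]
      simp only [mul_assoc]
    have hconj : (T2 * T1 * C) * EM f * (T2 * T1 * C)ᴴ = EM f := by
      rw [hstep, hkey]
      have hm1 : T1 * (lam • EM e) * T1ᴴ = (1 : ℂ) • EM d := TV_maps hlam hone hde
      rw [hm1, one_smul]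
      have hm2 : T2 * ((1 : ℂ) • EM d) * T2ᴴ = (1 : ℂ) • EM f := TV_maps hone hone hdf'
      rw [one_smul, one_smul] at hm2
      exact hm2
    have hX : (T2 * T1 * C) ∈ Matrix.unitaryGroup (V m) ℂ :=
      mul_mem (mul_mem hT2.1 hT1.1) hCu
    have hXX : (T2 * T1 * C)ᴴ * (T2 * T1 * C) = 1 := by
      have h3 := Matrix.mem_unitaryGroup_iff'.mp hX
      rwa [Matrix.star_eq_conjTranspose] at h3
    have h2 := congrArg (fun Y => Y * (T2 * T1 * C)) hconj
    rw [mul_assoc ((T2 * T1 * C) * EM f), hXX, mul_one] at h2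
    exact h2
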